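/- Let Ω ⊆ ℝ² be open, v ∈ C^∞(Ω), p ∈ (1,∞), and let x ∈ Ω be a point with Dv(x) ≠ 0 at which |Dv(x)|² Δv(x) + (p − 2) Δ∞v(x) = 0 (the p-Laplace equation in nondivergence form). Let W(y) = |Dv(y)|^{−1} Dv(y), which is C¹ on a neighborhood of x. Then |DW(x)|² = |D²v(x) Dv(x)|² / |Dv(x)|⁴ + p(p − 2) (Δ∞v(x))² / |Dv(x)|⁶, where the first term on the right equals |D(log|Dv|)(x)|². -/

import Mathlib

open Real MeasureTheory
open scoped RealInnerProductSpace

noncomputable section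

/-- The Euclidean plane ℝ². -/
abbrev E2 : Type := EuclideanSpace ℝ (Fin 2)

/-- Standard basis vector. -/
def ee (i : Fin 2) : E2 := EuclideanSpace.single i (1 : ℝ)

/-- Partial derivative ∂ᵢf. -/
def pd (i : Fin 2) (f : E2 → ℝ) (x : E2) : ℝ := fderiv ℝ f x (ee i)

/-- Second partial derivative ∂ᵢ∂ⱼf. -/
def pd2 (i j : Fin 2) (f : E2 → ℝ) (x : E2) : ℝ := pd i (pd j f) x

/-- |Df|², squared Euclidean norm of the gradient. -/
def gradSq (f : E2 → ℝ) (x : E2) : ℝ := (pd 0 f x) ^ 2 + (pd 1 f x) ^ 2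

/-- |Df|, Euclidean norm of the gradient. -/
def gradNorm (f : E2 → ℝ) (x : E2) : ℝ := Real.sqrt (gradSq f x)

/-- Laplacian Δf = tr D²f. -/
def lap (f : E2 → ℝ) (x : E2) : ℝ := pd2 0 0 f x + pd2 1 1 f x

/-- ∞-Laplacian Δ∞f = D²f Df · Df. -/
def infLap (f : E2 → ℝ) (x : E2) : ℝ :=
  pd2 0 0 f x * pd 0 f x * pd 0 f x + pd2 0 1 f x * pd 0 f x * pd 1 f x +
  pd2 1 0 f x * pd 1 f x * pd 0 f x + pd2 1 1 f x * pd 1 f x * pd 1 f x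

/-- |D²f|², squared Frobenius norm of the Hessian. -/
def hessFrobSq (f : E2 → ℝ) (x : E2) : ℝ :=
  (pd2 0 0 f x) ^ 2 + (pd2 0 1 f x) ^ 2 + (pd2 1 0 f x) ^ 2 + (pd2 1 1 f x) ^ 2

/-- det D²f, determinant of the Hessian. -/
def detHess (f : E2 → ℝ) (x : E2) : ℝ :=
  pd2 0 0 f x * pd2 1 1 f x - pd2 0 1 f x * pd2 1 0 f x

/-- |D²f Df|². -/
def hessGradSq (f : E2 → ℝ) (x : E2) : ℝ :=
  (pd2 0 0 f x * pd 0 f x + pd2 0 1 f x * pd 1 f x) ^ 2 +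
  (pd2 1 0 f x * pd 0 f x + pd2 1 1 f x * pd 1 f x) ^ 2

/-- Jacobian determinant of the planar map with components `F 0`, `F 1`. -/
def jdet (F : Fin 2 → E2 → ℝ) (x : E2) : ℝ :=
  pd 0 (F 0) x * pd 1 (F 1) x - pd 1 (F 0) x * pd 0 (F 1) x

/-- Squared Frobenius norm of the Jacobian of the planar map with components `F 0`, `F 1`. -/
def jFrobSq (F : Fin 2 → E2 → ℝ) (x : E2) : ℝ :=
  (pd 0 (F 0) x) ^ 2 + (pd 1 (F 0) x) ^ 2 + (pd 0 (F 1) x) ^ 2 + (pd 1 (F 1) x) ^ 2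

/-- Df · Dg. -/
def gradDot (f g : E2 → ℝ) (x : E2) : ℝ :=
  pd 0 f x * pd 0 g x + pd 1 f x * pd 1 g x

/-- D²ψ Dv · Dv. -/
def hessQuad (ψ v : E2 → ℝ) (x : E2) : ℝ :=
  pd2 0 0 ψ x * pd 0 v x * pd 0 v x + pd2 0 1 ψ x * pd 0 v x * pd 1 v x +
  pd2 1 0 ψ x * pd 1 v x * pd 0 v x + pd2 1 1 ψ x * pd 1 v x * pd 1 v x

/-- (D²v Dv) · Dψ. -/
def hessGradDot (v ψ : E2 → ℝ) (x : E2) : ℝ :=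
  (pd2 0 0 v x * pd 0 v x + pd2 0 1 v x * pd 1 v x) * pd 0 ψ x +
  (pd2 1 0 v x * pd 0 v x + pd2 1 1 v x * pd 1 v x) * pd 1 ψ x

/-- Smooth compactly supported test function on Ω. -/
def IsTestOn (ψ : E2 → ℝ) (Ω : Set E2) : Prop :=
  ContDiff ℝ (⊤ : ℕ∞) ψ ∧ HasCompactSupport ψ ∧ tsupport ψ ⊆ Ω

/-- Components of W = |Dv|⁻¹ Dv. -/
def Wcomp (v : E2 → ℝ) (i : Fin 2) : E2 → ℝ := fun y => (gradNorm v y)⁻¹ * pd i v y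


private lemma stmt9_alg1 (a b al be ga p r : ℝ) (hr0 : 0 < r) (hr2 : r ^ 2 = a ^ 2 + b ^ 2)
    (hpl : (a ^ 2 + b ^ 2) * (al + ga) +
      (p - 2) * (al * a * a + be * a * b + be * b * a + ga * b * b) = 0) :
    (r⁻¹ * al + a * ((-(1 / (2 * r)) / r ^ 2) * (a * al + a * al + (b * be + b * be)))) ^ 2 +
    (r⁻¹ * be + a * ((-(1 / (2 * r)) / r ^ 2) * (a * be + a * be + (b * ga + b * ga)))) ^ 2 +
    (r⁻¹ * be + b * ((-(1 / (2 * r)) / r ^ 2) * (a * al + a * al + (b * be + b * be)))) ^ 2 +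
    (r⁻¹ * ga + b * ((-(1 / (2 * r)) / r ^ 2) * (a * be + a * be + (b * ga + b * ga)))) ^ 2
    = ((al * a + be * b) ^ 2 + (be * a + ga * b) ^ 2) / (a ^ 2 + b ^ 2) ^ 2 +
      p * (p - 2) * (al * a * a + be * a * b + be * b * a + ga * b * b) ^ 2
        / (a ^ 2 + b ^ 2) ^ 3 := by
  have hrne : r ≠ 0 := ne_of_gt hr0
  have hs : a ^ 2 + b ^ 2 ≠ 0 := hr2 ▸ (by positivity)
  have key : ∀ X g Y : ℝ, (r⁻¹ * X + g * ((-(1 / (2 * r)) / r ^ 2) * Y)) ^ 2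
      = (2 * (a ^ 2 + b ^ 2) * X - g * Y) ^ 2 / (4 * (a ^ 2 + b ^ 2) ^ 3) := by
    intro X g Y
    rw [← hr2]
    field_simp
    ring
  rw [key, key, key, key]
  rw [← add_div, ← add_div, ← add_div,
    div_add_div _ _ (by positivity : ((a:ℝ) ^ 2 + b ^ 2) ^ 2 ≠ 0)
      (by positivity : ((a:ℝ) ^ 2 + b ^ 2) ^ 3 ≠ 0),
    div_eq_div_iff (by positivity : (4:ℝ) * (a ^ 2 + b ^ 2) ^ 3 ≠ 0)
      (by positivity : ((a:ℝ) ^ 2 + b ^ 2) ^ 2 * ((a ^ 2 + b ^ 2) ^ 3) ≠ 0)]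
  linear_combination (4 * (a ^ 2 + b ^ 2) ^ 5 *
    ((a ^ 2 + b ^ 2) * (al + ga) - p * (al * a * a + be * a * b + be * b * a + ga * b * b))) * hpl

private lemma stmt9_alg2 (a b al be ga r : ℝ) (hr0 : 0 < r) (hr2 : r ^ 2 = a ^ 2 + b ^ 2) :
    (r⁻¹ * ((1 / (2 * r)) * (a * al + a * al + (b * be + b * be)))) ^ 2 +
    (r⁻¹ * ((1 / (2 * r)) * (a * be + a * be + (b * ga + b * ga)))) ^ 2
    = ((al * a + be * b) ^ 2 + (be * a + ga * b) ^ 2) / (a ^ 2 + b ^ 2) ^ 2 := by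
  have hrne : r ≠ 0 := ne_of_gt hr0
  have hs : a ^ 2 + b ^ 2 ≠ 0 := hr2 ▸ (by positivity)
  rw [← hr2]
  field_simp
  ring

/-- identity for |DW|² where W = |Dv|⁻¹Dv, at a point where the
p-Laplace equation holds in nondivergence form and Dv ≠ 0. -/
theorem stmt_9 (Ω : Set E2) (hΩ : IsOpen Ω) (v : E2 → ℝ)
    (hv : ContDiffOn ℝ (⊤ : ℕ∞) v Ω) (p : ℝ) (hp : 1 < p)
    (x : E2) (hx : x ∈ Ω) (hgrad : gradSq v x ≠ 0)
    (hpl : gradSq v x * lap v x + (p - 2) * infLap v x = 0) :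
    jFrobSq (Wcomp v) x
      = hessGradSq v x / (gradSq v x) ^ 2
        + p * (p - 2) * (infLap v x) ^ 2 / (gradSq v x) ^ 3 ∧
    (pd 0 (fun y => Real.log (gradNorm v y)) x) ^ 2
        + (pd 1 (fun y => Real.log (gradNorm v y)) x) ^ 2
      = hessGradSq v x / (gradSq v x) ^ 2 := by

  have hmem : Ω ∈ nhds x := hΩ.mem_nhds hx
  have hvx : ContDiffAt ℝ (⊤ : ℕ∞) v x := hv.contDiffAt hmem
  have hF : ContDiffAt ℝ (⊤ : ℕ∞) (fderiv ℝ v) x := hvx.fderiv_right (by simp)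
  have hpdC : ∀ j : Fin 2, ContDiffAt ℝ (⊤ : ℕ∞) (pd j v) x := fun j =>
    hF.clm_apply contDiffAt_const
  have hD : ∀ j : Fin 2, HasFDerivAt (pd j v) (fderiv ℝ (pd j v) x) x := fun j =>
    ((hpdC j).differentiableAt (by norm_cast)).hasFDerivAt
  have hsym : pd2 0 1 v x = pd2 1 0 v x := by
    have hsymm := hvx.isSymmSndFDerivAt (n := (⊤ : ℕ∞)) (by rw [minSmoothness_of_isRCLikeNormedField]; norm_cast)
    have key : ∀ i j : Fin 2, pd2 i j v x = fderiv ℝ (fderiv ℝ v) x (ee i) (ee j) := by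
      intro i j
      show fderiv ℝ (fun y => fderiv ℝ v y (ee j)) x (ee i) = _
      rw [fderiv_clm_apply (hF.differentiableAt (by norm_cast)) (differentiableAt_const _)]
      simp
    rw [key, key, hsymm (ee 0) (ee 1)]
  have hs0 : 0 < gradSq v x :=
    lt_of_le_of_ne (add_nonneg (sq_nonneg _) (sq_nonneg _)) (Ne.symm hgrad)
  have hrpos : 0 < gradNorm v x := Real.sqrt_pos.2 hs0
  have hr2 : gradNorm v x ^ 2 = (pd 0 v x) ^ 2 + (pd 1 v x) ^ 2 := Real.sq_sqrt hs0.le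
  have hGS : HasFDerivAt (gradSq v)
      ((pd 0 v x • fderiv ℝ (pd 0 v) x + pd 0 v x • fderiv ℝ (pd 0 v) x) +
       (pd 1 v x • fderiv ℝ (pd 1 v) x + pd 1 v x • fderiv ℝ (pd 1 v) x)) x := by
    have : gradSq v = fun y => pd 0 v y * pd 0 v y + pd 1 v y * pd 1 v y := by
      funext y; simp [gradSq, sq]
    rw [this]
    exact ((hD 0).mul (hD 0)).add ((hD 1).mul (hD 1))
  set L := (pd 0 v x • fderiv ℝ (pd 0 v) x + pd 0 v x • fderiv ℝ (pd 0 v) x) +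
       (pd 1 v x • fderiv ℝ (pd 1 v) x + pd 1 v x • fderiv ℝ (pd 1 v) x) with hL
  have hSq : HasDerivAt Real.sqrt (1 / (2 * Real.sqrt (gradSq v x))) (gradSq v x) :=
    Real.hasDerivAt_sqrt hgrad
  have hGN : HasFDerivAt (gradNorm v) ((1 / (2 * Real.sqrt (gradSq v x))) • L) x :=
    hSq.comp_hasFDerivAt x hGS
  have hInv : HasDerivAt (fun t => (Real.sqrt t)⁻¹)
      (-(1 / (2 * Real.sqrt (gradSq v x))) / Real.sqrt (gradSq v x) ^ 2) (gradSq v x) :=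
    hSq.inv (ne_of_gt hrpos)
  have hGNinv : HasFDerivAt (fun y => (gradNorm v y)⁻¹)
      ((-(1 / (2 * Real.sqrt (gradSq v x))) / Real.sqrt (gradSq v x) ^ 2) • L) x :=
    hInv.comp_hasFDerivAt x hGS
  have hW : ∀ j : Fin 2, HasFDerivAt (Wcomp v j)
      ((gradNorm v x)⁻¹ • fderiv ℝ (pd j v) x +
       pd j v x • ((-(1 / (2 * Real.sqrt (gradSq v x))) / Real.sqrt (gradSq v x) ^ 2) • L)) x :=
    fun j => hGNinv.mul (hD j)
  have hLog : HasFDerivAt (fun y => Real.log (gradNorm v y))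
      ((gradNorm v x)⁻¹ • ((1 / (2 * Real.sqrt (gradSq v x))) • L)) x :=
    (Real.hasDerivAt_log (ne_of_gt hrpos)).comp_hasFDerivAt x hGN
  have eL : ∀ i : Fin 2, L (ee i) =
      pd 0 v x * pd2 i 0 v x + pd 0 v x * pd2 i 0 v x +
      (pd 1 v x * pd2 i 1 v x + pd 1 v x * pd2 i 1 v x) := by
    intro i
    have e0 : fderiv ℝ (pd 0 v) x (ee i) = pd2 i 0 v x := rfl
    have e1 : fderiv ℝ (pd 1 v) x (ee i) = pd2 i 1 v x := rfl
    simp [hL, e0, e1]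
  have hpdW : ∀ i j : Fin 2, pd i (Wcomp v j) x =
      (gradNorm v x)⁻¹ * pd2 i j v x +
      pd j v x * ((-(1 / (2 * gradNorm v x)) / gradNorm v x ^ 2) *
        (pd 0 v x * pd2 i 0 v x + pd 0 v x * pd2 i 0 v x +
         (pd 1 v x * pd2 i 1 v x + pd 1 v x * pd2 i 1 v x))) := by
    intro i j
    have h := (hW j).fderiv
    show fderiv ℝ (Wcomp v j) x (ee i) = _
    rw [h]
    have ej : fderiv ℝ (pd j v) x (ee i) = pd2 i j v x := rfl
    simp [ej, eL i, gradNorm, mul_comm, mul_assoc, mul_left_comm]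
  have hpdLog : ∀ i : Fin 2, pd i (fun y => Real.log (gradNorm v y)) x =
      (gradNorm v x)⁻¹ * ((1 / (2 * gradNorm v x)) *
        (pd 0 v x * pd2 i 0 v x + pd 0 v x * pd2 i 0 v x +
         (pd 1 v x * pd2 i 1 v x + pd 1 v x * pd2 i 1 v x))) := by
    intro i
    have h := hLog.fderiv
    show fderiv ℝ (fun y => Real.log (gradNorm v y)) x (ee i) = _
    rw [h]
    simp [eL i, gradNorm, mul_comm, mul_assoc, mul_left_comm]
  unfold gradSq lap infLap at hpl
  rw [hsym] at hpl
  constructor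
  · unfold jFrobSq
    rw [hpdW 0 0, hpdW 1 0, hpdW 0 1, hpdW 1 1]
    unfold hessGradSq infLap gradSq
    rw [hsym]
    exact stmt9_alg1 (pd 0 v x) (pd 1 v x) (pd2 0 0 v x) (pd2 1 0 v x) (pd2 1 1 v x) p
      (gradNorm v x) hrpos hr2 hpl
  · rw [hpdLog 0, hpdLog 1]
    unfold hessGradSq gradSq
    rw [hsym]
    exact stmt9_alg2 (pd 0 v x) (pd 1 v x) (pd2 0 0 v x) (pd2 1 0 v x) (pd2 1 1 v x)
      (gradNorm v x) hrpos hr2
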